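/- Let f be μ-strongly convex and L-smooth with minimizer x*, stochastic gradients ∇f(x_k) + e with E[e]=0, E[||e||^2]=σ^2, and Polyak step size h_k = 2(f(x_k)-f*)/(||∇f(x_k)||^2 + σ^2). Then E[q_{k+1} | x_k] ≤ (1 - μ h_k) q_k ≤ q_k (β + r q_k)/(β + q_k), where r = 1 - μ/L and β = σ^2/(2μL), q_k = (1/2)||x_k - x*||^2. -/

import Mathlib

open scoped RealInnerProductSpace
open MeasureTheory

set_option maxHeartbeats 1000000

theorem stmt_18 {d : ℕ} {Ω : Type*} [MeasureSpace Ω]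
    [IsProbabilityMeasure (volume : Measure Ω)]
    (μ L σ : ℝ) (hμ : 0 < μ) (hμL : μ ≤ L) (hσ : 0 < σ)
    (f : EuclideanSpace ℝ (Fin d) → ℝ) (g : EuclideanSpace ℝ (Fin d) → EuclideanSpace ℝ (Fin d))
    (hconv : ∀ x y, f x - (f y + ⟪g y, x - y⟫) ≥ μ/2 * ‖x - y‖^2)
    (hsmooth : ∀ x y, f x - (f y + ⟪g y, x - y⟫) ≥ (1/(2*L)) * ‖g x - g y‖^2)
    (xstar : EuclideanSpace ℝ (Fin d)) (hmin : ∀ x, f xstar ≤ f x)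
    (hgstar : g xstar = 0)
    (e : Ω → EuclideanSpace ℝ (Fin d))
    (he_int : Integrable e) (he2_int : Integrable (fun ω => ‖e ω‖^2))
    (hmean : ∫ ω, e ω = 0) (hvar : ∫ ω, ‖e ω‖^2 = σ^2)
    (xk : EuclideanSpace ℝ (Fin d))
    (qk : ℝ) (hqk : qk = (1/2) * ‖xk - xstar‖^2) (hqkpos : 0 < qk)
    (hk : ℝ) (hdef : hk = 2 * (f xk - f xstar) / (‖g xk‖^2 + σ^2))
    (xk1 : Ω → EuclideanSpace ℝ (Fin d))
    (hiter : ∀ ω, xk1 ω = xk - hk • (g xk + e ω))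
    (r β : ℝ) (hr : r = 1 - μ/L) (hβ : β = σ^2 / (2 * μ * L)) :
    (∫ ω, (1/2) * ‖xk1 ω - xstar‖^2) ≤ (1 - μ * hk) * qk
      ∧ (1 - μ * hk) * qk ≤ qk * (β + r * qk) / (β + qk) := by
  have hL : 0 < L := lt_of_lt_of_le hμ hμL
  set F := f xk - f xstar with hFdef
  have hF : 0 ≤ F := by have := hmin xk; simp [hFdef]; linarith
  have hden : 0 < ‖g xk‖^2 + σ^2 := by positivity
  have hhk : 0 ≤ hk := by rw [hdef]; positivity
  -- strong convexity at (xstar, xk): inner product lower bound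
  have hI : ⟪g xk, xk - xstar⟫ ≥ F + μ * qk := by
    have h := hconv xstar xk
    have h1 : ⟪g xk, xstar - xk⟫ = -⟪g xk, xk - xstar⟫ := by
      rw [← neg_sub, inner_neg_right]
    have h2 : ‖xstar - xk‖ = ‖xk - xstar‖ := norm_sub_rev _ _
    rw [h1, h2] at h
    have := hmin xk
    rw [hqk]; rw [hqk] at *
    nlinarith [h]
  -- smoothness: ‖g xk‖² ≤ 2 L F
  have hG : ‖g xk‖^2 ≤ 2 * L * F := by
    have h := hsmooth xk xstar
    rw [hgstar, inner_zero_left, sub_zero] at h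
    have h2L : (0:ℝ) < 2*L := by linarith
    have hmm := mul_le_mul_of_nonneg_left h h2L.le
    have heq : (2*L) * ((1/(2*L)) * ‖g xk‖^2) = ‖g xk‖^2 := by field_simp
    rw [heq] at hmm
    have : F = f xk - f xstar := hFdef
    nlinarith [hmm]
  -- F ≥ μ qk
  have hFq : F ≥ μ * qk := by
    have h := hconv xk xstar
    rw [hgstar, inner_zero_left] at h
    rw [hqk]; nlinarith [h]
  -- hk * (‖g xk‖²+σ²) = 2F
  have hkden : hk * (‖g xk‖^2 + σ^2) = 2 * F := by
    rw [hdef]; field_simp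
  -- compute the integral
  set c := xk - xstar - hk • g xk with hc
  have hexp : ∀ ω, (1/2 : ℝ) * ‖xk1 ω - xstar‖^2
      = (1/2) * ‖c‖^2 - hk * ⟪c, e ω⟫ + (hk^2/2) * ‖e ω‖^2 := by
    intro ω
    have h1 : xk1 ω - xstar = c - hk • e ω := by
      rw [hiter, hc, smul_add]; abel
    rw [h1, norm_sub_sq_real, inner_smul_right, norm_smul, Real.norm_eq_abs,
      mul_pow, sq_abs]
    ring
  have hint : (∫ ω, (1/2 : ℝ) * ‖xk1 ω - xstar‖^2)
      = (1/2) * ‖c‖^2 + (hk^2/2) * σ^2 := by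
    have i1 : Integrable (fun ω => hk * ⟪c, e ω⟫) := (he_int.const_inner c).const_mul hk
    have i2 : Integrable (fun ω => (hk^2/2) * ‖e ω‖^2) := he2_int.const_mul _
    have heq : (fun ω => (1/2 : ℝ) * ‖xk1 ω - xstar‖^2)
        = fun ω => (1/2) * ‖c‖^2 - hk * ⟪c, e ω⟫ + (hk^2/2) * ‖e ω‖^2 := funext hexp
    have hsplit : (∫ ω, ((1/2:ℝ) * ‖c‖^2 - hk * ⟪c, e ω⟫ + (hk^2/2) * ‖e ω‖^2))
        = (∫ ω, ((1/2:ℝ) * ‖c‖^2 - hk * ⟪c, e ω⟫)) + ∫ ω, (hk^2/2) * ‖e ω‖^2 :=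
      integral_add ((integrable_const _).sub i1) i2
    have hsub : (∫ ω, ((1/2:ℝ) * ‖c‖^2 - hk * ⟪c, e ω⟫))
        = (∫ _ω : Ω, (1/2:ℝ) * ‖c‖^2) - ∫ ω, hk * ⟪c, e ω⟫ :=
      integral_sub (integrable_const _) i1
    rw [heq, hsplit, hsub, integral_const, integral_const_mul,
      integral_inner he_int, hmean, inner_zero_right, integral_const_mul, hvar]
    simp
  have hcnorm : ‖c‖^2 = ‖xk - xstar‖^2 - 2 * hk * ⟪xk - xstar, g xk⟫ + hk^2 * ‖g xk‖^2 := by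
    rw [hc, norm_sub_sq_real, inner_smul_right, norm_smul, Real.norm_eq_abs, mul_pow, sq_abs]
    ring
  have hsym : ⟪xk - xstar, g xk⟫ = ⟪g xk, xk - xstar⟫ := real_inner_comm _ _
  constructor
  · rw [hint, hcnorm, hsym]
    have h2q : ‖xk - xstar‖^2 = 2 * qk := by rw [hqk]; ring
    rw [h2q]
    nlinarith [hI, hhk, mul_le_mul_of_nonneg_left hI hhk, hkden]
  · -- second inequality
    have hβpos : 0 < β := by rw [hβ]; positivity
    have hβq : 0 < β + qk := by linarith
    rw [le_div_iff₀ hβq]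
    have key' : qk * (‖g xk‖^2 + σ^2) * (2*μ) ≤ 2 * F * (σ^2 + 2*μ*L*qk) := by
      nlinarith [mul_le_mul_of_nonneg_left hG (by positivity : (0:ℝ) ≤ 2*μ*qk),
        mul_le_mul_of_nonneg_right hFq (by positivity : (0:ℝ) ≤ 2*σ^2)]
    have hβ2 : β * (2*μ*L) = σ^2 := by rw [hβ]; field_simp
    have key : qk / L ≤ hk * (β + qk) := by
      rw [div_le_iff₀ hL]
      have hpos : (0:ℝ) < (‖g xk‖^2 + σ^2) * (2*μ) := by positivity
      rw [← mul_le_mul_iff_of_pos_right hpos]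
      have hrhs : hk*(β+qk)*L*((‖g xk‖^2+σ^2)*(2*μ))
          = (hk*(‖g xk‖^2+σ^2))*(β*(2*μ*L)) + (hk*(‖g xk‖^2+σ^2))*(2*μ*L*qk) := by ring
      rw [hrhs, hkden, hβ2]
      linarith [key']
    rw [hr]
    have key2 := mul_le_mul_of_nonneg_left key (le_of_lt (mul_pos hμ hqkpos))
    have hkey2 : μ * qk * (qk / L) = μ / L * qk^2 := by ring
    rw [hkey2] at key2
    nlinarith [key2]
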